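/- arXiv:1907.00655 — 2 statements merged into one kernel-verified Lean document; each statement's English description precedes it below -/
import Mathlib

section
/- For matrices A_1,...,A_m ∈ R^{n×n}, a labeled graph G(V,E), and a real p ≥ 1, the limit lim_{k→∞} [Σ_{s∈E_k} ‖A_s‖^p]^{1/(pk)} exists, where the sum ranges over all paths s of length k in G and A_s is the product of matrices along the path. -/
open scoped Classical
open Filter MvPolynomial

/-- The Frobenius norm, a submultiplicative matrix norm. -/
noncomputable def frob {a b : ℕ} (M : Matrix (Fin a) (Fin b) ℝ) : ℝ :=
  Real.sqrt (∑ i, ∑ j, (M i j)^2)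

/-- The set `E_k` of paths of length `k` in the labeled graph with edge set `E ⊆ V × V × L`:
sequences of `k` edges of `E` such that the target of each edge is the source of the next. -/
noncomputable def pathSet {V L : Type*} [Fintype V] [Fintype L]
    (E : Finset (V × V × L)) (k : ℕ) : Finset (Fin k → V × V × L) :=
  Finset.univ.filter (fun s =>
    (∀ i, s i ∈ E) ∧
    ∀ (i : ℕ) (h : i + 1 < k), (s ⟨i, Nat.lt_of_succ_lt h⟩).2.1 = (s ⟨i+1, h⟩).1)

/-- The sequence of labels along a path. -/
def labels {V L : Type*} {k : ℕ} (s : Fin k → V × V × L) : Fin k → L :=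
  fun i => (s i).2.2

/-- The product of matrices along a label sequence: `A_s = A_{σ_k} ⋯ A_{σ_1}`. -/
noncomputable def prodA {n : ℕ} {L : Type*} (A : L → Matrix (Fin n) (Fin n) ℝ)
    {k : ℕ} (σ : Fin k → L) : Matrix (Fin n) (Fin n) ℝ :=
  ((List.ofFn σ).reverse.map A).prod

/-- Maximum of a real-valued function over a (nonempty) finite set. -/
noncomputable def maxOver {α : Type*} (s : Finset α) (f : α → ℝ) : ℝ :=
  sSup (f '' ↑s)

/-- Strong connectivity: every node reaches every node by a path of length ≥ 1. -/
def StronglyConnected {V L : Type*} [Fintype V] [Fintype L]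
    (E : Finset (V × V × L)) : Prop :=
  ∀ u v : V, ∃ k : ℕ, ∃ s ∈ pathSet E (k+1), (s 0).1 = u ∧ (s (Fin.last k)).2.1 = v

attribute [local instance] Matrix.frobeniusSeminormedAddCommGroup Matrix.frobeniusNormedRing

lemma frob_eq_norm {a b : ℕ} (M : Matrix (Fin a) (Fin b) ℝ) : frob M = ‖M‖ := by
  rw [Matrix.frobenius_norm_def, frob, Real.sqrt_eq_rpow]
  congr 1
  refine Finset.sum_congr rfl fun i _ => Finset.sum_congr rfl fun j _ => ?_
  rw [Real.norm_eq_abs, Real.rpow_two, sq_abs]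

lemma frob_nonneg {a b : ℕ} (M : Matrix (Fin a) (Fin b) ℝ) : 0 ≤ frob M :=
  Real.sqrt_nonneg _

lemma frob_mul_le {n : ℕ} (M N : Matrix (Fin n) (Fin n) ℝ) :
    frob (M * N) ≤ frob M * frob N := by
  rw [frob_eq_norm, frob_eq_norm, frob_eq_norm]
  exact norm_mul_le M N

lemma prodA_split {n : ℕ} {L : Type*} (A : L → Matrix (Fin n) (Fin n) ℝ)
    {k l : ℕ} (σ : Fin (k + l) → L) :
    prodA A σ = prodA A (fun i => σ (Fin.natAdd k i)) * prodA A (fun i => σ (Fin.castAdd l i)) := by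
  unfold prodA
  rw [List.ofFn_add, List.reverse_append, List.map_append, List.prod_append]
  rfl

lemma mem_pathSet_split {V L : Type*} [Fintype V] [Fintype L]
    {E : Finset (V × V × L)} {k l : ℕ} {s : Fin (k + l) → V × V × L}
    (hs : s ∈ pathSet E (k + l)) :
    (fun i => s (Fin.castAdd l i)) ∈ pathSet E k ∧
      (fun i => s (Fin.natAdd k i)) ∈ pathSet E l := by
  rw [pathSet, Finset.mem_filter] at hs
  obtain ⟨-, h1, h2⟩ := hs
  constructor
  · rw [pathSet, Finset.mem_filter]
    refine ⟨Finset.mem_univ _, fun i => h1 _, fun i h => ?_⟩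
    exact h2 i (by omega)
  · rw [pathSet, Finset.mem_filter]
    refine ⟨Finset.mem_univ _, fun i => h1 _, fun i h => ?_⟩
    exact h2 (k + i) (by omega)

lemma split_injective {X : Type*} {k l : ℕ} :
    Function.Injective (fun (s : Fin (k + l) → X) =>
      ((fun i => s (Fin.castAdd l i), fun i => s (Fin.natAdd k i)) :
        (Fin k → X) × (Fin l → X))) := by
  intro s t h
  obtain ⟨h1, h2⟩ := Prod.mk.injEq .. ▸ h
  funext i
  refine Fin.addCases (fun j => ?_) (fun j => ?_) i
  · exact congrFun h1 j
  · exact congrFun h2 j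

lemma aSeq_submul {m n : ℕ} (A : Fin m → Matrix (Fin n) (Fin n) ℝ)
    {V : Type*} [Fintype V] (E : Finset (V × V × Fin m)) {p : ℝ} (hp : 1 ≤ p) (k l : ℕ) :
    (∑ s ∈ pathSet E (k + l), frob (prodA A (labels s)) ^ p) ≤
      (∑ s ∈ pathSet E k, frob (prodA A (labels s)) ^ p) *
      (∑ s ∈ pathSet E l, frob (prodA A (labels s)) ^ p) := by
  have hp0 : (0:ℝ) ≤ p := le_trans zero_le_one hp
  set g : ((Fin k → V × V × Fin m) × (Fin l → V × V × Fin m)) → ℝ :=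
    fun t => frob (prodA A (labels t.1)) ^ p * frob (prodA A (labels t.2)) ^ p with hg
  set sp : (Fin (k + l) → V × V × Fin m) → ((Fin k → V × V × Fin m) × (Fin l → V × V × Fin m)) :=
    fun s => (fun i => s (Fin.castAdd l i), fun i => s (Fin.natAdd k i)) with hsp
  calc ∑ s ∈ pathSet E (k + l), frob (prodA A (labels s)) ^ p
      ≤ ∑ s ∈ pathSet E (k + l), g (sp s) := by
        refine Finset.sum_le_sum fun s _ => ?_
        have : prodA A (labels s) = prodA A (labels (sp s).2) * prodA A (labels (sp s).1) := by
          have := prodA_split A (labels s)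
          exact this
        rw [this, hg]
        calc frob (prodA A (labels (sp s).2) * prodA A (labels (sp s).1)) ^ p
            ≤ (frob (prodA A (labels (sp s).2)) * frob (prodA A (labels (sp s).1))) ^ p :=
              Real.rpow_le_rpow (frob_nonneg _) (frob_mul_le _ _) hp0
          _ = frob (prodA A (labels (sp s).1)) ^ p * frob (prodA A (labels (sp s).2)) ^ p := by
              rw [Real.mul_rpow (frob_nonneg _) (frob_nonneg _), mul_comm]
    _ = ∑ t ∈ (pathSet E (k + l)).image sp, g t := by
        rw [Finset.sum_image (fun a _ b _ h => split_injective h)]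
    _ ≤ ∑ t ∈ (pathSet E k) ×ˢ (pathSet E l), g t := by
        refine Finset.sum_le_sum_of_subset_of_nonneg ?_ (fun t _ _ => ?_)
        · intro t ht
          obtain ⟨s, hs, rfl⟩ := Finset.mem_image.mp ht
          obtain ⟨h1, h2⟩ := mem_pathSet_split hs
          exact Finset.mem_product.mpr ⟨h1, h2⟩
        · exact mul_nonneg (Real.rpow_nonneg (frob_nonneg _) _)
            (Real.rpow_nonneg (frob_nonneg _) _)
    _ = _ := by rw [Finset.sum_product, Finset.sum_mul_sum]


/-- for matrices `A_1,…,A_m`, a labeled graph `G(V,E)` and a real `p ≥ 1`,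
the limit `lim_{k→∞} [Σ_{s∈E_k} ‖A_s‖^p]^{1/(pk)}` exists. -/
theorem sum_p_radius_limit_exists {m n : ℕ} (A : Fin m → Matrix (Fin n) (Fin n) ℝ)
    {V : Type*} [Fintype V] (E : Finset (V × V × Fin m)) (p : ℝ) (hp : 1 ≤ p) :
    ∃ L : ℝ, Tendsto
      (fun k : ℕ =>
        (∑ s ∈ pathSet E k, frob (prodA A (labels s)) ^ p) ^ (1 / (p * k)))
      atTop (nhds L) := by
  have hp0 : (0:ℝ) < p := lt_of_lt_of_le one_pos hp
  set a : ℕ → ℝ := fun k => ∑ s ∈ pathSet E k, frob (prodA A (labels s)) ^ p with ha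
  have hA0 : ∀ k, 0 ≤ a k := fun k =>
    Finset.sum_nonneg fun s _ => Real.rpow_nonneg (frob_nonneg _) _
  have hsub : ∀ k l, a (k + l) ≤ a k * a l := fun k l => aSeq_submul A E hp k l
  by_cases hz : ∃ j, 1 ≤ j ∧ a j = 0
  · obtain ⟨j, hj1, hj0⟩ := hz
    refine ⟨0, ?_⟩
    have hzero : ∀ k, j ≤ k → a k = 0 := by
      intro k hk
      have h1 := hsub j (k - j)
      rw [Nat.add_sub_cancel' hk, hj0, zero_mul] at h1
      exact le_antisymm h1 (hA0 k)
    have heq : (fun k : ℕ => a k ^ (1 / (p * k))) =ᶠ[atTop] fun _ => (0:ℝ) := by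
      filter_upwards [eventually_ge_atTop j] with k hk
      have hk0 : (0:ℝ) < (k:ℝ) := by exact_mod_cast lt_of_lt_of_le hj1 hk
      rw [hzero k hk, Real.zero_rpow (one_div_ne_zero (by positivity))]
    exact Tendsto.congr' heq.symm tendsto_const_nhds
  · push_neg at hz
    have hApos : ∀ k, 1 ≤ k → 0 < a k := fun k hk => lt_of_le_of_ne (hA0 k) (Ne.symm (hz k hk))
    set u : ℕ → ℝ := fun k => if k = 0 then 0 else Real.log (a k) with hu
    have hu_sub : Subadditive u := by
      intro x y
      rcases Nat.eq_zero_or_pos x with rfl | hx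
      · rcases Nat.eq_zero_or_pos y with rfl | hy
        · simp [hu]
        · simp [hu]
      · rcases Nat.eq_zero_or_pos y with rfl | hy
        · simp [hu]
        · have hx0 : x ≠ 0 := Nat.pos_iff_ne_zero.mp hx
          have hy0 : y ≠ 0 := Nat.pos_iff_ne_zero.mp hy
          simp only [hu, if_neg hx0, if_neg hy0, if_neg (by omega : x + y ≠ 0)]
          calc Real.log (a (x + y)) ≤ Real.log (a x * a y) :=
                Real.log_le_log (hApos _ (by omega)) (hsub x y)
            _ = Real.log (a x) + Real.log (a y) :=
                Real.log_mul (ne_of_gt (hApos x hx)) (ne_of_gt (hApos y hy))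
    have hform : ∀ k : ℕ, 1 ≤ k → a k ^ (1 / (p * k)) = Real.exp ((u k / k) / p) := by
      intro k hk
      have hk0 : (k:ℝ) ≠ 0 := by exact_mod_cast Nat.pos_iff_ne_zero.mp hk
      rw [Real.rpow_def_of_pos (hApos k hk)]
      congr 1
      simp only [hu, if_neg (Nat.pos_iff_ne_zero.mp hk)]
      rw [div_div, one_div]
      ring
    by_cases hbdd : BddBelow (Set.range fun k : ℕ => u k / k)
    · refine ⟨Real.exp (hu_sub.lim / p), ?_⟩
      have h1 : Tendsto (fun k : ℕ => Real.exp ((u k / k) / p)) atTop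
          (nhds (Real.exp (hu_sub.lim / p))) :=
        (Real.continuous_exp.tendsto _).comp ((hu_sub.tendsto_lim hbdd).div_const p)
      refine h1.congr' ?_
      filter_upwards [eventually_ge_atTop 1] with k hk
      exact (hform k hk).symm
    · refine ⟨0, ?_⟩
      rw [NormedAddCommGroup.tendsto_nhds_zero]
      intro ε hε
      obtain ⟨y, ⟨N, rfl⟩, hylt⟩ :=
        not_bddBelow_iff.mp hbdd (min (p * Real.log ε) (-1))
      have hN0 : N ≠ 0 := by
        rintro rfl
        simp only [hu, if_pos rfl, Nat.cast_zero, div_zero] at hylt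
        have : min (p * Real.log ε) (-1 : ℝ) ≤ -1 := min_le_right _ _
        linarith
      have hNpos : (0:ℝ) < (N:ℝ) := by
        exact_mod_cast Nat.pos_of_ne_zero hN0
      set c : ℝ := u N / N with hc
      set v : ℕ → ℝ := fun k => max (u k) (c * k) with hv
      have hv_sub : Subadditive v := by
        intro x y
        refine max_le ?_ ?_
        · exact (hu_sub x y).trans (add_le_add (le_max_left _ _) (le_max_left _ _))
        · have : c * ((x + y : ℕ) : ℝ) = c * x + c * y := by push_cast; ring
          rw [this]
          exact add_le_add (le_max_right _ _) (le_max_right _ _)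
      have hvbdd : BddBelow (Set.range fun k : ℕ => v k / k) := by
        refine ⟨min c 0, ?_⟩
        rintro x ⟨k, rfl⟩
        rcases Nat.eq_zero_or_pos k with rfl | hk
        · simp [hv, min_le_right c 0]
        · have hk0 : (0:ℝ) < (k:ℝ) := by exact_mod_cast hk
          have : c = c * k / k := by field_simp
          calc min c 0 ≤ c := min_le_left _ _
            _ = c * k / k := this
            _ ≤ v k / k := by
                gcongr
                exact le_max_right _ _
      have hlim_lt : hv_sub.lim < p * Real.log ε := by
        have h1 : hv_sub.lim ≤ v N / N := hv_sub.lim_le_div hvbdd hN0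
        have h2 : v N = u N := by
          have : c * (N:ℝ) = u N := by rw [hc]; field_simp
          rw [hv]; simp [this]
        rw [h2] at h1
        exact lt_of_le_of_lt h1 (lt_of_lt_of_le hylt (min_le_left _ _))
      have h2 : Tendsto (fun k : ℕ => Real.exp ((v k / k) / p)) atTop
          (nhds (Real.exp (hv_sub.lim / p))) :=
        (Real.continuous_exp.tendsto _).comp ((hv_sub.tendsto_lim hvbdd).div_const p)
      have h3 : Real.exp (hv_sub.lim / p) < ε := by
        have hlt : hv_sub.lim / p < (p * Real.log ε) / p :=
          div_lt_div_of_pos_right hlim_lt hp0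
        have : (p * Real.log ε) / p = Real.log ε := by field_simp
        rw [this] at hlt
        calc Real.exp (hv_sub.lim / p) < Real.exp (Real.log ε) := Real.exp_lt_exp.mpr hlt
          _ = ε := Real.exp_log hε
      filter_upwards [h2.eventually (gt_mem_nhds h3), eventually_ge_atTop 1] with k hklt hk1
      have hk0 : (0:ℝ) < (k:ℝ) := by exact_mod_cast hk1
      rw [Real.norm_of_nonneg (Real.rpow_nonneg (hA0 k) _), hform k hk1]
      refine lt_of_le_of_lt ?_ hklt
      apply Real.exp_le_exp.mpr
      have huv : u k ≤ v k := le_max_left _ _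
      have h4 : u k / k ≤ v k / k := by gcongr
      gcongr
end

section
/- Suppose for each node v of G there is a strictly positive continuous function p_v: R^n → R homogeneous of degree 2d, and γ̄ > 0 with p_v(A_σ x) ≤ γ̄^{2d} p_u(x) for all edges (u,v,σ). Then for every path s of length k with labels (σ_1,...,σ_k) from node u_0 to node u_k and every x, p_{u_k}(A_s x) ≤ γ̄^{2dk} p_{u_0}(x), and consequently ‖A_s‖ ≤ C γ̄^k for a constant C independent of k and s. -/
open scoped Classical
open Filter MvPolynomial

/-- The operator norm of a matrix induced by the Euclidean norm. -/
noncomputable def euclOpNorm {n : ℕ} (M : Matrix (Fin n) (Fin n) ℝ) : ℝ :=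
  ‖LinearMap.toContinuousLinearMap (Matrix.toEuclideanLin M)‖

lemma prodA_one {n : ℕ} {L : Type*} (A : L → Matrix (Fin n) (Fin n) ℝ) (σ : Fin 1 → L) :
    prodA A σ = A (σ 0) := by
  simp [prodA, List.ofFn_succ]

lemma prodA_succ {n : ℕ} {L : Type*} (A : L → Matrix (Fin n) (Fin n) ℝ) {k : ℕ}
    (σ : Fin (k+1) → L) :
    prodA A σ = A (σ (Fin.last k)) * prodA A (Fin.init σ) := by
  unfold prodA
  rw [List.ofFn_succ']
  simp [Fin.init_def]

lemma mem_pathSet_iff {V L : Type*} [Fintype V] [Fintype L]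
    {E : Finset (V × V × L)} {k : ℕ} {s : Fin k → V × V × L} :
    s ∈ pathSet E k ↔ (∀ i, s i ∈ E) ∧
      ∀ (i : ℕ) (h : i + 1 < k), (s ⟨i, Nat.lt_of_succ_lt h⟩).2.1 = (s ⟨i+1, h⟩).1 := by
  simp [pathSet]

lemma init_mem_pathSet {V L : Type*} [Fintype V] [Fintype L]
    {E : Finset (V × V × L)} {k : ℕ} {s : Fin (k+2) → V × V × L}
    (hs : s ∈ pathSet E (k+2)) : Fin.init s ∈ pathSet E (k+1) := by
  rw [mem_pathSet_iff] at hs ⊢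
  obtain ⟨h1, h2⟩ := hs
  refine ⟨fun i => h1 _, fun i h => ?_⟩
  have := h2 i (by omega)
  simpa [Fin.init_def, Fin.castSucc, Fin.castAdd, Fin.castLE] using this

/-- if strictly positive continuous functions `p_v`, homogeneous of degree
`2d`, satisfy `p_v(A_σ x) ≤ γ̄^{2d} p_u(x)` for all edges `(u,v,σ)`, then for every path
`s` of length `k ≥ 1` from `u₀` to `u_k` and every `x`, `p_{u_k}(A_s x) ≤ γ̄^{2dk} p_{u₀}(x)`,
and consequently `‖A_s‖ ≤ C γ̄^k` for a constant `C` independent of `k` and `s`. -/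
theorem lyapunov_along_paths {m n : ℕ} (A : Fin m → Matrix (Fin n) (Fin n) ℝ)
    {V : Type*} [Fintype V] (E : Finset (V × V × Fin m))
    (d : ℕ) (hd : 0 < d) (P : V → (Fin n → ℝ) → ℝ)
    (hcont : ∀ v, Continuous (P v))
    (hhom : ∀ v (lam : ℝ) (x : Fin n → ℝ), P v (lam • x) = lam ^ (2 * d) * P v x)
    (hpos : ∀ v (x : Fin n → ℝ), x ≠ 0 → 0 < P v x)
    (γ : ℝ) (hγ : 0 < γ)
    (hlyap : ∀ e ∈ E, ∀ x : Fin n → ℝ,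
      P e.2.1 ((A e.2.2).mulVec x) ≤ γ ^ (2 * d) * P e.1 x) :
    (∀ (k : ℕ), ∀ s ∈ pathSet E (k+1), ∀ x : Fin n → ℝ,
      P ((s (Fin.last k)).2.1) ((prodA A (labels s)).mulVec x)
        ≤ γ ^ (2 * d * (k+1)) * P ((s 0).1) x) ∧
    ∃ C : ℝ, ∀ (k : ℕ), ∀ s ∈ pathSet E (k+1),
      euclOpNorm (prodA A (labels s)) ≤ C * γ ^ (k+1) := by
  have hP0 : ∀ v, P v 0 = 0 := by
    intro v
    have h := hhom v 0 0
    rw [smul_zero, zero_pow (by omega : 2*d ≠ 0), zero_mul] at h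
    exact h
  have hPnn : ∀ v x, 0 ≤ P v x := by
    intro v x
    by_cases hx : x = 0
    · simp [hx, hP0]
    · exact (hpos v x hx).le
  -- Part 1
  have key : ∀ (k : ℕ), ∀ s ∈ pathSet E (k+1), ∀ x : Fin n → ℝ,
      P ((s (Fin.last k)).2.1) ((prodA A (labels s)).mulVec x)
        ≤ γ ^ (2 * d * (k+1)) * P ((s 0).1) x := by
    intro k
    induction k with
    | zero =>
      intro s hs x
      rw [mem_pathSet_iff] at hs
      have := hlyap (s 0) (hs.1 0) x
      simpa [prodA_one, labels, Fin.last] using this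
    | succ k ih =>
      intro s hs x
      have hinit := init_mem_pathSet hs
      rw [mem_pathSet_iff] at hs
      have hlab : labels (Fin.init s) = Fin.init (labels s) := rfl
      rw [prodA_succ, ← Matrix.mulVec_mulVec]
      have step := hlyap (s (Fin.last (k+1))) (hs.1 _)
        ((prodA A (Fin.init (labels s))).mulVec x)
      have hlink : (s (Fin.last (k+1))).1 = ((Fin.init s) (Fin.last k)).2.1 :=
        (hs.2 k (by omega)).symm
      have hih := ih (Fin.init s) hinit x
      rw [hlab] at hih
      have h0 : (Fin.init s) 0 = s 0 := by
        simp [Fin.init_def]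
      calc P ((s (Fin.last (k+1))).2.1)
            ((A (labels s (Fin.last (k+1)))).mulVec ((prodA A (Fin.init (labels s))).mulVec x))
          ≤ γ ^ (2*d) * P ((s (Fin.last (k+1))).1) ((prodA A (Fin.init (labels s))).mulVec x) :=
            step
        _ ≤ γ ^ (2*d) * (γ ^ (2*d*(k+1)) * P ((s 0).1) x) := by
            rw [hlink]
            have := hih
            rw [h0] at this
            exact mul_le_mul_of_nonneg_left this (by positivity)
        _ = γ ^ (2*d*(k+1+1)) * P ((s 0).1) x := by
            rw [← mul_assoc, ← pow_add]
            ring_nf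
  refine ⟨key, ?_⟩
  -- Part 2
  by_cases hn : n = 0
  · subst hn
    refine ⟨1, fun k s hs => ?_⟩
    unfold euclOpNorm
    rw [one_mul]
    apply ContinuousLinearMap.opNorm_le_bound _ (pow_pos hγ _).le
    intro x
    have : x = 0 := Subsingleton.elim _ _
    simp [this]
  by_cases hV : Nonempty V
  swap
  · refine ⟨0, fun k s hs => ?_⟩
    exact absurd ⟨(s 0).1⟩ hV
  -- main case
  set S := Metric.sphere (0 : EuclideanSpace ℝ (Fin n)) 1 with hSdef
  have hScomp : IsCompact S := isCompact_sphere _ _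
  haveI : Nonempty (Fin n) := ⟨⟨0, Nat.pos_of_ne_zero hn⟩⟩
  haveI : Nontrivial (EuclideanSpace ℝ (Fin n)) :=
    Equiv.nontrivial (WithLp.equiv 2 (Fin n → ℝ))
  have hSne : S.Nonempty := NormedSpace.sphere_nonempty.mpr zero_le_one
  have hcont' : ∀ v, Continuous (fun x : EuclideanSpace ℝ (Fin n) => P v (WithLp.equiv 2 _ x)) :=
    fun v => (hcont v).comp (PiLp.continuousLinearEquiv 2 ℝ (fun _ : Fin n => ℝ)).continuous
  choose z hzS hz using fun v : V => hScomp.exists_isMinOn hSne ((hcont' v).continuousOn)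
  choose w hwS hw using fun v : V => hScomp.exists_isMaxOn hSne ((hcont' v).continuousOn)
  set c : ℝ := Finset.univ.inf' (Finset.univ_nonempty) (fun v => P v (WithLp.equiv 2 _ (z v)))
    with hcdef
  set B : ℝ := Finset.univ.sup' (Finset.univ_nonempty) (fun v => P v (WithLp.equiv 2 _ (w v)))
    with hBdef
  have hcpos : 0 < c := by
    rw [hcdef]
    apply Finset.lt_inf'_iff (α := ℝ) _ |>.mpr
    intro v _
    apply hpos
    intro h
    have hz1 : ‖z v‖ = 1 := by
      have := hzS v; rw [hSdef, mem_sphere_iff_norm, sub_zero] at this; exact this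
    have : z v = 0 := by
      have : WithLp.equiv 2 (Fin n → ℝ) (z v) = 0 := h
      simpa using congrArg (WithLp.equiv 2 (Fin n → ℝ)).symm this
    rw [this] at hz1; simp at hz1
  have hBnn : 0 ≤ B := le_trans hcpos.le (by
    rw [hcdef, hBdef]
    obtain ⟨v⟩ := hV
    calc Finset.univ.inf' _ _ ≤ P v (WithLp.equiv 2 _ (z v)) := Finset.inf'_le _ (Finset.mem_univ v)
      _ ≤ P v (WithLp.equiv 2 _ (w v)) := isMaxOn_iff.mp (hw v) _ (hzS v)
      _ ≤ Finset.univ.sup' _ _ := Finset.le_sup' (fun v => P v (WithLp.equiv 2 _ (w v))) (Finset.mem_univ v))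
  have hlow : ∀ v (y : EuclideanSpace ℝ (Fin n)),
      c * ‖y‖ ^ (2*d) ≤ P v (WithLp.equiv 2 _ y) := by
    intro v y
    by_cases hy : y = 0
    · simp [hy, hP0, zero_pow (by omega : 2*d ≠ 0)]
    · have hu : (‖y‖⁻¹ • y) ∈ S := by
        simp [hSdef, norm_smul, norm_inv, inv_mul_cancel₀ (norm_ne_zero_iff.mpr hy)]
      have hcle : c ≤ P v (WithLp.equiv 2 _ (‖y‖⁻¹ • y)) := by
        calc c ≤ P v (WithLp.equiv 2 _ (z v)) := Finset.inf'_le _ (Finset.mem_univ v)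
          _ ≤ _ := isMinOn_iff.mp (hz v) _ hu
      have hrw : P v (WithLp.equiv 2 _ y) = ‖y‖ ^ (2*d) * P v (WithLp.equiv 2 _ (‖y‖⁻¹ • y)) := by
        rw [← hhom]
        congr 1
        rw [show ‖y‖ • WithLp.equiv 2 (Fin n → ℝ) (‖y‖⁻¹ • y) = WithLp.equiv 2 (Fin n → ℝ) (‖y‖ • ‖y‖⁻¹ • y) from rfl, smul_smul,
          mul_inv_cancel₀ (norm_ne_zero_iff.mpr hy), one_smul]
      rw [hrw, mul_comm c]
      exact mul_le_mul_of_nonneg_left hcle (by positivity)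
  have hup : ∀ v (y : EuclideanSpace ℝ (Fin n)),
      P v (WithLp.equiv 2 _ y) ≤ B * ‖y‖ ^ (2*d) := by
    intro v y
    by_cases hy : y = 0
    · simp [hy, hP0, zero_pow (by omega : 2*d ≠ 0)]
    · have hu : (‖y‖⁻¹ • y) ∈ S := by
        simp [hSdef, norm_smul, norm_inv, inv_mul_cancel₀ (norm_ne_zero_iff.mpr hy)]
      have hble : P v (WithLp.equiv 2 _ (‖y‖⁻¹ • y)) ≤ B := by
        calc P v (WithLp.equiv 2 _ (‖y‖⁻¹ • y)) ≤ P v (WithLp.equiv 2 _ (w v)) := isMaxOn_iff.mp (hw v) _ hu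
          _ ≤ B := Finset.le_sup' (fun v => P v (WithLp.equiv 2 _ (w v))) (Finset.mem_univ v)
      have hrw : P v (WithLp.equiv 2 _ y) = ‖y‖ ^ (2*d) * P v (WithLp.equiv 2 _ (‖y‖⁻¹ • y)) := by
        rw [← hhom]
        congr 1
        rw [show ‖y‖ • WithLp.equiv 2 (Fin n → ℝ) (‖y‖⁻¹ • y) = WithLp.equiv 2 (Fin n → ℝ) (‖y‖ • ‖y‖⁻¹ • y) from rfl, smul_smul,
          mul_inv_cancel₀ (norm_ne_zero_iff.mpr hy), one_smul]
      rw [hrw, mul_comm B]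
      exact mul_le_mul_of_nonneg_left hble (by positivity)
  set C : ℝ := (B / c) ^ ((2*d : ℝ)⁻¹) with hCdef
  have hCnn : 0 ≤ C := Real.rpow_nonneg (by positivity) _
  have hCpow : C ^ (2*d) = B / c := by
    rw [hCdef]
    rw [show ((2*d : ℝ)⁻¹) = (((2*d : ℕ) : ℝ))⁻¹ by push_cast; ring]
    exact Real.rpow_inv_natCast_pow (by positivity) (by omega)
  refine ⟨C, fun k s hs => ?_⟩
  unfold euclOpNorm
  apply ContinuousLinearMap.opNorm_le_bound _ (by positivity)
  intro x
  set M := prodA A (labels s) with hM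
  have happ : (LinearMap.toContinuousLinearMap (Matrix.toEuclideanLin M)) x
      = (WithLp.equiv 2 (Fin n → ℝ)).symm (M.mulVec (WithLp.equiv 2 _ x)) := rfl
  rw [happ]
  set y := (WithLp.equiv 2 (Fin n → ℝ)).symm (M.mulVec (WithLp.equiv 2 (Fin n → ℝ) x)) with hy
  have hkey := key k s hs (WithLp.equiv 2 _ x)
  have h1 : c * ‖y‖ ^ (2*d) ≤ γ ^ (2*d*(k+1)) * (B * ‖x‖ ^ (2*d)) := by
    calc c * ‖y‖ ^ (2*d) ≤ P ((s (Fin.last k)).2.1) (WithLp.equiv 2 _ y) :=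
          hlow _ y
      _ = P ((s (Fin.last k)).2.1) (M.mulVec (WithLp.equiv 2 _ x)) := by
          rw [hy]; simp
      _ ≤ γ ^ (2*d*(k+1)) * P ((s 0).1) (WithLp.equiv 2 _ x) := hkey
      _ ≤ γ ^ (2*d*(k+1)) * (B * ‖x‖ ^ (2*d)) :=
          mul_le_mul_of_nonneg_left (hup _ x) (by positivity)
  have h2 : ‖y‖ ^ (2*d) ≤ (C * γ ^ (k+1) * ‖x‖) ^ (2*d) := by
    have hrhs : (C * γ ^ (k+1) * ‖x‖) ^ (2*d) = (B/c) * (γ ^ (2*d*(k+1)) * ‖x‖ ^ (2*d)) := by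
      rw [mul_pow, mul_pow, hCpow, ← pow_mul]
      ring_nf
    rw [hrhs]
    rw [div_mul_eq_mul_div, le_div_iff₀ hcpos, mul_comm _ c]
    calc c * ‖y‖ ^ (2*d) ≤ γ ^ (2*d*(k+1)) * (B * ‖x‖ ^ (2*d)) := h1
      _ = B * (γ ^ (2*d*(k+1)) * ‖x‖ ^ (2*d)) := by ring
  have := (pow_le_pow_iff_left₀ (norm_nonneg y) (by positivity) (by omega : 2*d ≠ 0)).mp h2
  linarith [this]
end
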